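/- In the d-dimensional lattice graph, for every t with d−1 ≤ t ≤ dn−1 the map T₂^{(t)} : ℝ^{L_{t+1}} → ℝ^{∂D \ J_t^S}, sending interface potentials on L_{t+1} to boundary currents on ∂D \ J_t^S of the harmonic extension in the upper subgraph G^{(t)}, is injective. Similarly the corner map T₂'^{(t)} : ℝ^{L_t} → ℝ^{J_{t−1}^S} is injective for d ≤ t ≤ dn. -/

import Mathlib

noncomputable section
open Classical Finset

namespace DiscreteCalderon

/-- Vertices of the ambient lattice `ℤ^d`. -/
abbrev V (d : ℕ) := Fin d → ℤ

/-- Interior vertex set `D = {x : 1 ≤ x_i ≤ n}`. -/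
def Dset (d n : ℕ) : Set (V d) := {x | ∀ i, 1 ≤ x i ∧ x i ≤ (n : ℤ)}

/-- ℓ¹ distance. -/
def dist1 {d : ℕ} (p q : V d) : ℤ := ∑ i, |p i - q i|

/-- Boundary vertex set `∂D`: vertices at ℓ¹ distance 1 from `D`. -/
def Bset (d n : ℕ) : Set (V d) := {p | p ∉ Dset d n ∧ ∃ q ∈ Dset d n, dist1 p q = 1}

/-- All vertices of the graph, `D ∪ ∂D`. -/
def Vset (d n : ℕ) : Set (V d) := Dset d n ∪ Bset d n

/-- Adjacency of the lattice graph: ℓ¹ distance 1, both endpoints vertices,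
not both on the boundary. -/
def Adj (d n : ℕ) (p q : V d) : Prop :=
  dist1 p q = 1 ∧ p ∈ Vset d n ∧ q ∈ Vset d n ∧ (p ∈ Dset d n ∨ q ∈ Dset d n)

/-- A finite box containing all vertices. -/
def box (d n : ℕ) : Finset (V d) :=
  Fintype.piFinset (fun _ : Fin d => Finset.Icc (0 : ℤ) ((n : ℤ) + 1))

/-- Neighbours of `p` in the graph, as a finite set. -/
def nbr (d n : ℕ) (p : V d) : Finset (V d) := (box d n).filter (fun q => Adj d n p q)

/-- Interior neighbours of `p`. -/
def nbrD (d n : ℕ) (p : V d) : Finset (V d) := (nbr d n p).filter (fun q => q ∈ Dset d n)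

/-- The discrete (weighted) Laplacian `(Δ_γ u)_p = ∑_{q∈N(p)} γ_{qp}(u_q - u_p)`. -/
def lap (d n : ℕ) (γ : V d → V d → ℝ) (u : V d → ℝ) (p : V d) : ℝ :=
  ∑ q ∈ nbr d n p, γ q p * (u q - u p)

/-- The boundary current `(D_γ u)_p = ∑_{q∈N(p)∩D} γ_{pq}(u_q - u_p)`
(there is exactly one interior neighbour of a boundary node). -/
def cur (d n : ℕ) (γ : V d → V d → ℝ) (u : V d → ℝ) (p : V d) : ℝ :=
  ∑ q ∈ nbrD d n p, γ p q * (u q - u p)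

/-- A strictly positive symmetric conductivity. -/
def GoodCond (d n : ℕ) (γ : V d → V d → ℝ) : Prop :=
  (∀ p q, γ p q = γ q p) ∧ ∀ p q, Adj d n p q → 0 < γ p q

/-- The coordinate sum of a lattice point. -/
def sum1 {d : ℕ} (x : V d) : ℤ := ∑ i, x i

/-- Interior diagonal slice `L_t`. -/
def L (d n : ℕ) (t : ℤ) : Set (V d) := {x | x ∈ Dset d n ∧ sum1 x = t}

/-- `L_t^S = ∪_{ℓ ≤ t} L_ℓ`. -/
def LS (d n : ℕ) (t : ℤ) : Set (V d) := {x | x ∈ Dset d n ∧ sum1 x ≤ t}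

/-- Boundary diagonal slice `K_t`. -/
def K (d n : ℕ) (t : ℤ) : Set (V d) := {x | x ∈ Bset d n ∧ sum1 x = t}

/-- `K_t^- = {x ∈ K_t : min_i x_i = 0}`. -/
def Km (d n : ℕ) (t : ℤ) : Set (V d) := {x | x ∈ K d n t ∧ ∃ i, x i = 0}

/-- `K_t^+ = {x ∈ K_t : max_i x_i = n+1}`. -/
def Kp (d n : ℕ) (t : ℤ) : Set (V d) := {x | x ∈ K d n t ∧ ∃ i, x i = (n : ℤ) + 1}

/-- `K_t^{S-} = ∪_{ℓ ≤ t} K_ℓ^-`. -/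
def KSm (d n : ℕ) (t : ℤ) : Set (V d) := {x | x ∈ Bset d n ∧ sum1 x ≤ t ∧ ∃ i, x i = 0}

/-- `K_t^{S+} = ∪_{ℓ ≤ t} K_ℓ^+`. -/
def KSp (d n : ℕ) (t : ℤ) : Set (V d) := {x | x ∈ Bset d n ∧ sum1 x ≤ t ∧ ∃ i, x i = (n : ℤ) + 1}

/-- The lower boundary region `J_t^S = K_t^{S-} ∪ K_{t+1}^{S+}`. -/
def JS (d n : ℕ) (t : ℤ) : Set (V d) := KSm d n t ∪ KSp d n (t + 1)

/-- `J_t = K_t^- ∪ K_{t+1}^+`. -/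
def Jslice (d n : ℕ) (t : ℤ) : Set (V d) := Km d n t ∪ Kp d n (t + 1)

/-- `u` is the γ-harmonic extension of boundary data `φ` (zero-extension convention
outside `D ∪ ∂D`). -/
def IsSol (d n : ℕ) (γ : V d → V d → ℝ) (φ u : V d → ℝ) : Prop :=
  (∀ p, p ∉ Vset d n → u p = 0) ∧
  (∀ p ∈ Dset d n, lap d n γ u p = 0) ∧
  (∀ p ∈ Bset d n, u p = φ p)

/-- The Laplacian row vector `v_p`. -/
def vrow (d n : ℕ) (γ : V d → V d → ℝ) (p : V d) : V d → ℝ := fun q =>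
  if Adj d n p q then γ p q
  else if q = p then -(∑ r ∈ nbr d n p, γ p r) else 0

/-- Restriction of a function to a set (zero outside). -/
def rst {d : ℕ} (S : Set (V d)) (f : V d → ℝ) : V d → ℝ := fun q => if q ∈ S then f q else 0

/-- Euclidean inner product of (vertex-supported) functions. -/
def dot (d n : ℕ) (f g : V d → ℝ) : ℝ := ∑ p ∈ box d n, f p * g p

/-- The localized solution space `𝒰^{(t)}`: restrictions to `L_t^S ∪ J_t^S` of
harmonic extensions of boundary potentials in `ker T₁^{(t)}`. -/
def Uset (d n : ℕ) (γ : V d → V d → ℝ) (t : ℤ) : Set (V d → ℝ) :=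
  {u | (∀ p, p ∉ LS d n t ∪ JS d n t → u p = 0) ∧
    ∃ φ w : V d → ℝ, (∀ p, p ∉ JS d n t → φ p = 0) ∧ IsSol d n γ φ w ∧
      (∀ p ∈ L d n (t + 1), w p = 0) ∧ ∀ p ∈ LS d n t ∪ JS d n t, u p = w p}

/-- The set `E_t` of edges between the consecutive layers:
`E(K_t^-, L_{t+1}) ∪ E(L_t, K_{t+1}^+) ∪ E(L_t, L_{t+1})`. -/
def EdgeT (d n : ℕ) (t : ℤ) (p q : V d) : Prop :=
  Adj d n p q ∧
    ((p ∈ Km d n t ∧ q ∈ L d n (t + 1)) ∨ (q ∈ Km d n t ∧ p ∈ L d n (t + 1)) ∨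
     (p ∈ L d n t ∧ q ∈ Kp d n (t + 1)) ∨ (q ∈ L d n t ∧ p ∈ Kp d n (t + 1)) ∨
     (p ∈ L d n t ∧ q ∈ L d n (t + 1)) ∨ (q ∈ L d n t ∧ p ∈ L d n (t + 1)))

/-- The edge vector `J_p^u ∈ ℝ^{E_t}`, `J_p^u(pq) = u_p - u_q` on edges of `E_t`
incident to `p`, and `0` otherwise (as a symmetric function of edge endpoints). -/
def Jvec (d n : ℕ) (t : ℤ) (u : V d → ℝ) (p : V d) : V d → V d → ℝ := fun a b =>
  if EdgeT d n t a b then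
    (if a = p then u a - u b else if b = p then u b - u a else 0)
  else 0

/-- Inner product of edge functions. -/
def dotE (d n : ℕ) (f g : V d → V d → ℝ) : ℝ :=
  ∑ p ∈ box d n, ∑ q ∈ box d n, f p q * g p q

section Helpers
variable {d n : ℕ}

lemma dist1_comm (p q : V d) : dist1 p q = dist1 q p := by
  unfold dist1; exact Finset.sum_congr rfl fun i _ => abs_sub_comm _ _

lemma sum1_update (x : V d) (i : Fin d) (c : ℤ) :
    sum1 (Function.update x i c) = sum1 x - x i + c := by
  unfold sum1
  rw [Finset.sum_update_of_mem (Finset.mem_univ i)]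
  have : ∑ j ∈ Finset.univ \ {i}, x j = (∑ j, x j) - x i := by
    rw [Finset.sum_sdiff_eq_sub (by simp), Finset.sum_singleton]
  rw [this]; ring

lemma dist1_update (x : V d) (i : Fin d) (c : ℤ) :
    dist1 (Function.update x i c) x = |c - x i| := by
  unfold dist1
  rw [Finset.sum_eq_single i]
  · simp
  · intro j _ hj; simp [Function.update_of_ne hj]
  · simp

lemma adj_structure {p q : V d} (h : dist1 p q = 1) :
    ∃ (i : Fin d) (ε : ℤ), (ε = 1 ∨ ε = -1) ∧ q = Function.update p i (p i + ε) := by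
  have hnn : ∀ j, 0 ≤ |p j - q j| := fun j => abs_nonneg _
  have hex : ∃ i : Fin d, |p i - q i| ≠ 0 := by
    by_contra hc
    push_neg at hc
    have : dist1 p q = 0 := Finset.sum_eq_zero fun j _ => hc j
    omega
  obtain ⟨i, hi⟩ := hex
  have hsplit : |p i - q i| + ∑ j ∈ Finset.univ.erase i, |p j - q j| = 1 := by
    rw [Finset.add_sum_erase _ (fun j => |p j - q j|) (Finset.mem_univ i)]; exact h
  have hrest : 0 ≤ ∑ j ∈ Finset.univ.erase i, |p j - q j| :=
    Finset.sum_nonneg fun j _ => hnn j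
  have hi1 : |p i - q i| = 1 := by
    have := hnn i; omega
  have hz : ∀ j ∈ Finset.univ.erase i, |p j - q j| = 0 := by
    have hr0 : ∑ j ∈ Finset.univ.erase i, |p j - q j| = 0 := by omega
    exact fun j hj => le_antisymm (by
      by_contra hcon
      push_neg at hcon
      have h5 := Finset.single_le_sum (f := fun j => |p j - q j|) (fun j _ => hnn j) hj
      omega) (hnn j)
  refine ⟨i, q i - p i, ?_, ?_⟩
  · rw [abs_sub_comm] at hi1; rcases abs_eq (by norm_num : (0:ℤ) ≤ 1) |>.mp hi1 with h' | h' <;> omega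
  · funext j
    by_cases hj : j = i
    · subst hj; simp
    · rw [Function.update_of_ne hj]
      have := hz j (Finset.mem_erase.mpr ⟨hj, Finset.mem_univ j⟩)
      have : p j - q j = 0 := abs_eq_zero.mp this
      omega

lemma mem_box_of_Vset {p : V d} (hp : p ∈ Vset d n) : p ∈ box d n := by
  rw [box, Fintype.mem_piFinset]
  intro i
  rw [Finset.mem_Icc]
  rcases hp with hp | hp
  · have := hp i; omega
  · obtain ⟨-, q, hq, hdq⟩ := hp
    obtain ⟨j, ε, hε, rfl⟩ := adj_structure (by rw [dist1_comm]; exact hdq)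
    by_cases hij : i = j
    · subst hij; have := hq i; simp; omega
    · rw [Function.update_of_ne hij]; have := hq i; omega

lemma mem_nbr {p q : V d} : q ∈ nbr d n p ↔ Adj d n p q :=
  ⟨fun h => (Finset.mem_filter.mp h).2,
   fun h => Finset.mem_filter.mpr ⟨mem_box_of_Vset h.2.2.1, h⟩⟩

lemma adj_symm {p q : V d} (h : Adj d n p q) : Adj d n q p :=
  ⟨by rw [dist1_comm]; exact h.1, h.2.2.1, h.2.1, h.2.2.2.symm⟩

end Helpers
section Core
variable {d n : ℕ}

lemma sum1_nonneg_of_D {x : V d} (hx : x ∈ Dset d n) : 0 ≤ sum1 x :=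
  Finset.sum_nonneg fun i _ => le_trans zero_le_one (hx i).1

lemma toNat_lt_toNat_of {a b : ℤ} (h0 : 0 ≤ a) (h : a < b) : a.toNat < b.toNat := by omega

lemma lower_ucp (d n : ℕ) (hd : 2 ≤ d) (γ : V d → V d → ℝ) (hγ : GoodCond d n γ)
    (t : ℤ) (u : V d → ℝ)
    (h2 : ∀ p ∈ LS d n (t - 1), lap d n γ u p = 0)
    (h3 : ∀ p ∈ JS d n (t - 1), u p = 0)
    (h4 : ∀ p ∈ JS d n (t - 1), cur d n γ u p = 0) :
    ∀ x ∈ Dset d n, sum1 x ≤ t → u x = 0 := by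
  have hd0 : 0 < d := by omega
  set i0 : Fin d := ⟨0, hd0⟩ with hi0
  set μ : V d → ℤ := fun x => sum1 x * ((n : ℤ) + 2) + x i0 with hμ
  suffices H : ∀ N : ℕ, ∀ x, (μ x).toNat = N → x ∈ Dset d n → sum1 x ≤ t → u x = 0 by
    intro x hx hst; exact H _ x rfl hx hst
  intro N
  induction N using Nat.strong_induction_on with
  | _ N IH =>
  intro x hN hxD hxt
  have hμnn : ∀ z : V d, z ∈ Dset d n → 0 ≤ μ z := by
    intro z hz
    have h1 : 0 ≤ sum1 z := sum1_nonneg_of_D hz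
    have h2' : 0 ≤ sum1 z * ((n : ℤ) + 2) := mul_nonneg h1 (by omega)
    have := (hz i0).1
    simp only [hμ]; omega
  have IHapp : ∀ q, q ∈ Dset d n → sum1 q ≤ t → μ q < μ x → u q = 0 := by
    intro q hq hqt hlt
    exact IH (μ q).toNat (hN ▸ toNat_lt_toNat_of (hμnn q hq) hlt) q rfl hq hqt
  -- measure comparison for a lower layer
  have hlayer : ∀ q, q ∈ Dset d n → sum1 q < sum1 x → μ q < μ x := by
    intro q hq hlt
    have h1 : sum1 q * ((n : ℤ) + 2) ≤ (sum1 x - 1) * ((n : ℤ) + 2) :=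
      mul_le_mul_of_nonneg_right (by omega) (by omega)
    have h2' := (hq i0).2
    have h3' := (hxD i0).1
    simp only [hμ]; nlinarith
  have hsame : ∀ q, q ∈ Dset d n → sum1 q = sum1 x → q i0 < x i0 → μ q < μ x := by
    intro q hq he hlt
    simp only [hμ, he]; omega
  have hx0 := hxD i0
  by_cases hcase : x i0 = 1
  · -- boundary step via corner boundary vertex below
    set y : V d := Function.update x i0 0 with hy
    have hyx : dist1 y x = 1 := by
      rw [hy, dist1_update, hcase]; norm_num
    have hyD : y ∉ Dset d n := by
      intro h; have := (h i0).1; simp [hy] at this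
    have hyB : y ∈ Bset d n := ⟨hyD, x, hxD, hyx⟩
    have hys : sum1 y = sum1 x - 1 := by
      rw [hy, sum1_update]; omega
    have hyJ : y ∈ JS d n (t - 1) :=
      Or.inl ⟨hyB, by omega, ⟨i0, by simp [hy]⟩⟩
    have hAdjyx : Adj d n y x :=
      ⟨hyx, Or.inr hyB, Or.inl hxD, Or.inr hxD⟩
    have hxmem : x ∈ nbrD d n y :=
      Finset.mem_filter.mpr ⟨mem_nbr.mpr hAdjyx, hxD⟩
    have hcur : cur d n γ u y = γ y x * (u x - u y) := by
      rw [cur]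
      apply Finset.sum_eq_single_of_mem x hxmem
      intro b hb hbx
      exfalso
      obtain ⟨hbn, hbD⟩ := Finset.mem_filter.mp hb
      have hAdjyb := mem_nbr.mp hbn
      obtain ⟨i, ε, hε, rfl⟩ := adj_structure hAdjyb.1
      by_cases hii : i = i0
      · subst hii
        have h1 := (hbD i0).1
        simp only [Function.update_self, hy] at h1
        have hε1 : ε = 1 := by rcases hε with h | h <;> omega
        apply hbx
        funext j
        by_cases hj : j = i0
        · subst hj; simp [hy, hε1, hcase]
        · rw [Function.update_of_ne hj, hy, Function.update_of_ne hj]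
      · have h1 := (hbD i0).1
        rw [Function.update_of_ne (fun h => hii h.symm)] at h1
        simp [hy] at h1
    have hc0 := h4 y hyJ
    rw [hcur, h3 y hyJ, sub_zero] at hc0
    have hpos := hγ.2 y x hAdjyx
    rcases mul_eq_zero.mp hc0 with h | h
    · exact absurd h (ne_of_gt hpos)
    · exact h
  · -- interior step via the vertex below in direction i0
    set y : V d := Function.update x i0 (x i0 - 1) with hy
    have hyD : y ∈ Dset d n := by
      intro i
      by_cases hi : i = i0
      · subst hi; simp only [hy, Function.update_self]; omega
      · rw [hy, Function.update_of_ne hi]; exact hxD i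
    have hys : sum1 y = sum1 x - 1 := by rw [hy, sum1_update]; omega
    have hyx : dist1 y x = 1 := by
      rw [hy, dist1_update, show x i0 - 1 - x i0 = -1 by ring]; norm_num
    have huy : u y = 0 := IHapp y hyD (by omega) (hlayer y hyD (by omega))
    have hAdjyx : Adj d n y x := ⟨hyx, Or.inl hyD, Or.inl hxD, Or.inl hyD⟩
    have hxmem : x ∈ nbr d n y := mem_nbr.mpr hAdjyx
    have hlap : lap d n γ u y = γ x y * (u x - u y) := by
      rw [lap]
      apply Finset.sum_eq_single_of_mem x hxmem
      intro b hb hbx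
      have hAdjyb := mem_nbr.mp hb
      obtain ⟨i, ε, hε, hbe⟩ := adj_structure hAdjyb.1
      have hbs : sum1 b = sum1 x - 1 + ε := by rw [hbe, sum1_update]; omega
      have hub : u b = 0 := by
        rcases hAdjyb.2.2.1 with hbD | hbB
        · -- interior neighbour
          rcases hε with hε1 | hε1
          · -- upward neighbour, same layer as x
            by_cases hii : i = i0
            · exfalso; apply hbx
              subst hii
              rw [hbe]
              funext j
              by_cases hj : j = i0
              · subst hj; simp [hy, hε1]
              · rw [Function.update_of_ne hj, hy, Function.update_of_ne hj]
            · have hbi0 : b i0 = x i0 - 1 := by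
                rw [hbe, Function.update_of_ne (fun h => hii h.symm), hy,
                  Function.update_self]
              exact IHapp b hbD (by omega) (hsame b hbD (by omega) (by omega))
          · exact IHapp b hbD (by omega) (hlayer b hbD (by omega))
        · -- boundary neighbour: lies in J^S_{t-1}
          have hbi : b i = y i + ε := by rw [hbe, Function.update_self]
          have hbout : ¬(1 ≤ b i ∧ b i ≤ (n : ℤ)) := by
            intro hcon
            apply hbB.1
            intro j
            by_cases hj : j = i
            · subst hj; exact hcon
            · rw [hbe, Function.update_of_ne hj]; exact hyD j
          have hyi := hyD i
          have hbi2 : b i = 0 ∨ b i = (n : ℤ) + 1 := by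
            rcases hε with h | h <;> omega
          apply h3
          rcases hbi2 with h0 | h1
          · exact Or.inl ⟨hbB, by omega, ⟨i, h0⟩⟩
          · refine Or.inr ⟨hbB, by omega, ⟨i, h1⟩⟩
      rw [hub, huy]; ring
    have hl0 := h2 y ⟨hyD, by omega⟩
    rw [hlap, huy, sub_zero] at hl0
    have hpos := hγ.2 x y (adj_symm hAdjyx)
    rcases mul_eq_zero.mp hl0 with h | h
    · exact absurd h (ne_of_gt hpos)
    · exact h

end Core
section Core2
variable {d n : ℕ}

lemma sum1_le_of_D {x : V d} (hx : x ∈ Dset d n) : sum1 x ≤ (d : ℤ) * n := by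
  have h := Finset.sum_le_sum (s := Finset.univ) (f := fun i => x i)
    (g := fun _ => (n : ℤ)) (fun i _ => (hx i).2)
  simpa [sum1, mul_comm] using h

lemma upper_ucp (d n : ℕ) (hd : 2 ≤ d) (γ : V d → V d → ℝ) (hγ : GoodCond d n γ)
    (t : ℤ) (w : V d → ℝ)
    (h2 : ∀ p ∈ Dset d n \ LS d n (t + 1), lap d n γ w p = 0)
    (h3 : ∀ p ∈ Bset d n \ JS d n t, w p = 0)
    (h4 : ∀ p ∈ Bset d n \ JS d n t, cur d n γ w p = 0) :
    ∀ x ∈ Dset d n, t + 1 ≤ sum1 x → w x = 0 := by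
  have hd0 : 0 < d := by omega
  set i0 : Fin d := ⟨0, hd0⟩ with hi0
  set μ : V d → ℤ :=
    fun x => ((d : ℤ) * n - sum1 x) * ((n : ℤ) + 2) + ((n : ℤ) - x i0) with hμ
  suffices H : ∀ N : ℕ, ∀ x, (μ x).toNat = N → x ∈ Dset d n → t + 1 ≤ sum1 x → w x = 0 by
    intro x hx hst; exact H _ x rfl hx hst
  intro N
  induction N using Nat.strong_induction_on with
  | _ N IH =>
  intro x hN hxD hxt
  have hμnn : ∀ z : V d, z ∈ Dset d n → 0 ≤ μ z := by
    intro z hz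
    have h1 := sum1_le_of_D hz
    have h2' : 0 ≤ ((d : ℤ) * n - sum1 z) * ((n : ℤ) + 2) :=
      mul_nonneg (by omega) (by omega)
    have := (hz i0).2
    simp only [hμ]; omega
  have IHapp : ∀ q, q ∈ Dset d n → t + 1 ≤ sum1 q → μ q < μ x → w q = 0 := by
    intro q hq hqt hlt
    exact IH (μ q).toNat (hN ▸ toNat_lt_toNat_of (hμnn q hq) hlt) q rfl hq hqt
  have hlayer : ∀ q, q ∈ Dset d n → sum1 x < sum1 q → μ q < μ x := by
    intro q hq hlt
    have h1 : ((d : ℤ) * n - sum1 q) * ((n : ℤ) + 2) ≤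
        ((d : ℤ) * n - sum1 x - 1) * ((n : ℤ) + 2) :=
      mul_le_mul_of_nonneg_right (by omega) (by omega)
    have h2' := (hq i0).1
    have h3' := (hxD i0).2
    simp only [hμ]; nlinarith
  have hsame : ∀ q, q ∈ Dset d n → sum1 q = sum1 x → x i0 < q i0 → μ q < μ x := by
    intro q hq he hlt
    simp only [hμ, he]; omega
  have hx0 := hxD i0
  by_cases hcase : x i0 = (n : ℤ)
  · set y : V d := Function.update x i0 ((n : ℤ) + 1) with hy
    have hyx : dist1 y x = 1 := by
      rw [hy, dist1_update, hcase, show (n : ℤ) + 1 - n = 1 by ring]; norm_num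
    have hyD : y ∉ Dset d n := by
      intro h; have := (h i0).2; simp [hy] at this
    have hyB : y ∈ Bset d n := ⟨hyD, x, hxD, hyx⟩
    have hys : sum1 y = sum1 x + 1 := by rw [hy, sum1_update]; omega
    have hynJ : y ∉ JS d n t := by
      rintro (⟨-, hs, -⟩ | ⟨-, hs, -⟩) <;> omega
    have hAdjyx : Adj d n y x := ⟨hyx, Or.inr hyB, Or.inl hxD, Or.inr hxD⟩
    have hxmem : x ∈ nbrD d n y :=
      Finset.mem_filter.mpr ⟨mem_nbr.mpr hAdjyx, hxD⟩
    have hcur : cur d n γ w y = γ y x * (w x - w y) := by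
      rw [cur]
      apply Finset.sum_eq_single_of_mem x hxmem
      intro b hb hbx
      exfalso
      obtain ⟨hbn, hbD⟩ := Finset.mem_filter.mp hb
      have hAdjyb := mem_nbr.mp hbn
      obtain ⟨i, ε, hε, rfl⟩ := adj_structure hAdjyb.1
      by_cases hii : i = i0
      · subst hii
        have h1 := (hbD i0).2
        simp only [Function.update_self, hy] at h1
        have hε1 : ε = -1 := by rcases hε with h | h <;> omega
        apply hbx
        funext j
        by_cases hj : j = i0
        · subst hj; simp only [Function.update_self]; simp only [hy, Function.update_self]; omega
        · rw [Function.update_of_ne hj, hy, Function.update_of_ne hj]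
      · have h1 := (hbD i0).2
        rw [Function.update_of_ne (fun h => hii h.symm)] at h1
        simp [hy] at h1
    have hc0 := h4 y ⟨hyB, hynJ⟩
    rw [hcur, h3 y ⟨hyB, hynJ⟩, sub_zero] at hc0
    have hpos := hγ.2 y x hAdjyx
    rcases mul_eq_zero.mp hc0 with h | h
    · exact absurd h (ne_of_gt hpos)
    · exact h
  · set y : V d := Function.update x i0 (x i0 + 1) with hy
    have hyD : y ∈ Dset d n := by
      intro i
      by_cases hi : i = i0
      · subst hi; simp only [hy, Function.update_self]; omega
      · rw [hy, Function.update_of_ne hi]; exact hxD i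
    have hys : sum1 y = sum1 x + 1 := by rw [hy, sum1_update]; omega
    have hyx : dist1 y x = 1 := by
      rw [hy, dist1_update, show x i0 + 1 - x i0 = 1 by ring]; norm_num
    have hwy : w y = 0 := IHapp y hyD (by omega) (hlayer y hyD (by omega))
    have hAdjyx : Adj d n y x := ⟨hyx, Or.inl hyD, Or.inl hxD, Or.inl hyD⟩
    have hxmem : x ∈ nbr d n y := mem_nbr.mpr hAdjyx
    have hlap : lap d n γ w y = γ x y * (w x - w y) := by
      rw [lap]
      apply Finset.sum_eq_single_of_mem x hxmem
      intro b hb hbx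
      have hAdjyb := mem_nbr.mp hb
      obtain ⟨i, ε, hε, hbe⟩ := adj_structure hAdjyb.1
      have hbs : sum1 b = sum1 x + 1 + ε := by rw [hbe, sum1_update]; omega
      have hwb : w b = 0 := by
        rcases hAdjyb.2.2.1 with hbD | hbB
        · rcases hε with hε1 | hε1
          · exact IHapp b hbD (by omega) (hlayer b hbD (by omega))
          · by_cases hii : i = i0
            · exfalso; apply hbx
              subst hii
              rw [hbe]
              funext j
              by_cases hj : j = i0
              · subst hj; simp only [Function.update_self]; simp only [hy, Function.update_self]; omega
              · rw [Function.update_of_ne hj, hy, Function.update_of_ne hj]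
            · have hbi0 : b i0 = x i0 + 1 := by
                rw [hbe, Function.update_of_ne (fun h => hii h.symm), hy,
                  Function.update_self]
              exact IHapp b hbD (by omega) (hsame b hbD (by omega) (by omega))
        · have hbi : b i = y i + ε := by rw [hbe, Function.update_self]
          have hbout : ¬(1 ≤ b i ∧ b i ≤ (n : ℤ)) := by
            intro hcon
            apply hbB.1
            intro j
            by_cases hj : j = i
            · subst hj; exact hcon
            · rw [hbe, Function.update_of_ne hj]; exact hyD j
          have hyi := hyD i
          have hbnJ : b ∉ JS d n t := by
            rcases hε with hε1 | hε1
            · rintro (⟨-, hs, -⟩ | ⟨-, hs, -⟩) <;> omega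
            · have hble : ∀ j, b j ≤ (n : ℤ) := by
                intro j
                by_cases hj : j = i
                · subst hj; omega
                · rw [hbe, Function.update_of_ne hj]; exact (hyD j).2
              rintro (⟨-, hs, -⟩ | ⟨-, hs, j, hj⟩)
              · omega
              · have := hble j; omega
          exact h3 b ⟨hbB, hbnJ⟩
      rw [hwb, hwy]; ring
    have hl0 := h2 y ⟨hyD, fun h => by have := h.2; omega⟩
    rw [hlap, hwy, sub_zero] at hl0
    have hpos := hγ.2 x y (adj_symm hAdjyx)
    rcases mul_eq_zero.mp hl0 with h | h
    · exact absurd h (ne_of_gt hpos)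
    · exact h

end Core2
/-- injectivity of the interface-to-boundary current maps `T₂^{(t)}`
(on the upper subgraph `G^{(t)}`) and `T₂'^{(t)}` (on the corner subgraph), stated
relationally: vanishing boundary current forces vanishing interface potential. -/
theorem stmt7 (d n : ℕ) (hd : 2 ≤ d) (hn : 1 ≤ n)
    (γ : V d → V d → ℝ) (hγ : GoodCond d n γ) :
    (∀ t : ℤ, (d : ℤ) - 1 ≤ t → t ≤ (d : ℤ) * n - 1 → ∀ w : V d → ℝ,
      (∀ p, p ∉ Vset d n \ (LS d n t ∪ JS d n t) → w p = 0) →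
      (∀ p ∈ Dset d n \ LS d n (t + 1), lap d n γ w p = 0) →
      (∀ p ∈ Bset d n \ JS d n t, w p = 0) →
      (∀ p ∈ Bset d n \ JS d n t, cur d n γ w p = 0) →
      ∀ p ∈ L d n (t + 1), w p = 0) ∧
    (∀ t : ℤ, (d : ℤ) ≤ t → t ≤ (d : ℤ) * n → ∀ u : V d → ℝ,
      (∀ p, p ∉ LS d n t ∪ JS d n (t - 1) → u p = 0) →
      (∀ p ∈ LS d n (t - 1), lap d n γ u p = 0) →
      (∀ p ∈ JS d n (t - 1), u p = 0) →
      (∀ p ∈ JS d n (t - 1), cur d n γ u p = 0) →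
      ∀ p ∈ L d n t, u p = 0) := by
  constructor
  · intro t _ _ w _ h2 h3 h4 p hp
    exact upper_ucp d n hd γ hγ t w h2 h3 h4 p hp.1 hp.2.ge
  · intro t _ _ u _ h2 h3 h4 p hp
    exact lower_ucp d n hd γ hγ t u h2 h3 h4 p hp.1 hp.2.le

end DiscreteCalderon
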